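/- For integers x, y and n ≥ 0, the Gaussian binomial coefficients satisfy the q-Vandermonde identity: sum over k from 0 to n of v^{x·k − y·(n−k)} · [x choose n−k] · [y choose k] = [x+y choose n]. -/

import Mathlib

noncomputable section

/-- The indeterminate `v`. -/
def v : RatFunc ℚ := RatFunc.X

/-- Quantum integer `[r] = (v^r - v^{-r})/(v - v⁻¹)`. -/
def qint (r : ℤ) : RatFunc ℚ := (v ^ r - v ^ (-r)) / (v - v⁻¹)

/-- Quantum factorial `[n]!`. -/
def qfact (n : ℕ) : RatFunc ℚ := ∏ i ∈ Finset.range n, qint ((i : ℤ) + 1)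

/-- Gaussian binomial coefficient `[m choose r]`, zero for `r < 0`. -/
def qbinom (m r : ℤ) : RatFunc ℚ :=
  if r < 0 then 0
  else (∏ i ∈ Finset.range r.toNat, qint (m - (i : ℤ))) / qfact r.toNat

lemma v_ne_zero : v ≠ 0 := RatFunc.X_ne_zero

lemma v_pow_ne_one {k : ℕ} (hk : k ≠ 0) : v ^ k ≠ 1 := by
  intro h
  have : (Polynomial.X : Polynomial ℚ) ^ k = 1 := by
    apply RatFunc.algebraMap_injective ℚ
    simpa [map_pow, RatFunc.algebraMap_X, v] using h
  have := congrArg Polynomial.natDegree this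
  simp [Polynomial.natDegree_X_pow] at this
  exact hk this

lemma v_zpow_ne_one {k : ℤ} (hk : k ≠ 0) : v ^ k ≠ 1 := by
  rcases lt_or_gt_of_ne hk with h | h
  · intro he
    have : v ^ (-k) = 1 := by
      rw [zpow_neg, he, inv_one]
    rw [show (-k) = ((-k).toNat : ℤ) by omega, zpow_natCast] at this
    exact v_pow_ne_one (by omega) this
  · intro he
    rw [show k = (k.toNat : ℤ) by omega, zpow_natCast] at he
    exact v_pow_ne_one (by omega) he

lemma sub_inv_ne_zero : v - v⁻¹ ≠ 0 := by
  intro h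
  have h1 : v * v = 1 := by
    have := sub_eq_zero.mp h
    field_simp [v_ne_zero] at this
    linear_combination this
  exact v_pow_ne_one (k := 2) (by norm_num) (by rw [pow_two]; exact h1)

lemma qint_ne_zero {r : ℤ} (hr : r ≠ 0) : qint r ≠ 0 := by
  unfold qint
  apply div_ne_zero _ sub_inv_ne_zero
  intro h
  have h1 := sub_eq_zero.mp h
  have h2 : v ^ (2 * r) = 1 := by
    have : v ^ r * v ^ r = v ^ r * v ^ (-r) := by rw [← h1]
    rw [← zpow_add₀ v_ne_zero, ← zpow_add₀ v_ne_zero] at this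
    simpa [two_mul] using this
  exact v_zpow_ne_one (by omega) h2

lemma qfact_ne_zero (n : ℕ) : qfact n ≠ 0 := by
  unfold qfact
  apply Finset.prod_ne_zero_iff.mpr
  intro i _
  exact qint_ne_zero (by omega)

lemma zpw (a b : ℤ) : v ^ a * v ^ b = v ^ (a + b) := (zpow_add₀ v_ne_zero a b).symm

lemma qint_split (m r : ℤ) : qint m = v ^ r * qint (m - r) + v ^ (r - m) * qint r := by
  unfold qint
  rw [mul_div_assoc', mul_div_assoc', ← add_div]
  congr 1
  rw [mul_sub, mul_sub, zpw, zpw, zpw, zpw]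
  have e1 : r + (m - r) = m := by ring
  have e2 : r + -(m - r) = -(m - 2*r) := by ring
  have e3 : r - m + r = -(m - 2*r) := by ring
  have e4 : r - m + -r = -m := by ring
  rw [e1, e2, e3, e4]; ring

lemma qbinom_neg (m : ℤ) {r : ℤ} (hr : r < 0) : qbinom m r = 0 := by
  unfold qbinom; rw [if_pos hr]

lemma qbinom_zero (m : ℤ) : qbinom m 0 = 1 := by
  unfold qbinom; simp [qfact]

lemma qbinom_nat (m : ℤ) (r : ℕ) :
    qbinom m (r : ℤ) = (∏ i ∈ Finset.range r, qint (m - (i : ℤ))) / qfact r := by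
  unfold qbinom
  rw [if_neg (by omega), Int.toNat_natCast]

lemma qfact_succ (r : ℕ) : qfact (r + 1) = qfact r * qint ((r : ℤ) + 1) := by
  unfold qfact; rw [Finset.prod_range_succ]

lemma pascal_nat (m : ℤ) (r : ℕ) :
    qbinom m (r : ℤ) =
      v ^ (r : ℤ) * qbinom (m - 1) (r : ℤ) + v ^ ((r : ℤ) - m) * qbinom (m - 1) ((r : ℤ) - 1) := by
  cases r with
  | zero =>
    have : ((0:ℕ):ℤ) - 1 = -1 := by norm_num
    rw [this, Nat.cast_zero, qbinom_zero, qbinom_zero,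
      qbinom_neg (m-1) (show (-1:ℤ) < 0 by norm_num)]
    simp
  | succ r =>
    have hc : ((r + 1 : ℕ) : ℤ) - 1 = (r : ℤ) := by push_cast; ring
    rw [hc, qbinom_nat, qbinom_nat, qbinom_nat]
    have hP1 : ∏ i ∈ Finset.range (r+1), qint (m - (i : ℤ))
        = qint m * ∏ i ∈ Finset.range r, qint (m - 1 - (i : ℤ)) := by
      rw [Finset.prod_range_succ']
      rw [Finset.prod_congr rfl (fun i _ => by
        rw [show m - ((i+1:ℕ):ℤ) = m - 1 - (i:ℤ) by push_cast; ring])]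
      rw [show m - ((0:ℕ):ℤ) = m by norm_num, mul_comm]
    have hP2 : ∏ i ∈ Finset.range (r+1), qint (m - 1 - (i : ℤ))
        = (∏ i ∈ Finset.range r, qint (m - 1 - (i : ℤ))) * qint (m - ((r:ℤ)+1)) := by
      rw [Finset.prod_range_succ]; congr 1; ring_nf
    rw [hP1, hP2, qfact_succ]
    set P := ∏ i ∈ Finset.range r, qint (m - 1 - (i : ℤ)) with hPdef
    have h1 : qint ((r : ℤ) + 1) ≠ 0 := qint_ne_zero (by omega)
    have h2 : qfact r ≠ 0 := qfact_ne_zero r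
    have key := qint_split m ((r : ℤ) + 1)
    field_simp
    push_cast
    linear_combination P * key

lemma pascal (m : ℤ) (r : ℤ) (hr : 0 ≤ r) :
    qbinom m r = v ^ r * qbinom (m - 1) r + v ^ (r - m) * qbinom (m - 1) (r - 1) := by
  rw [show r = (r.toNat : ℤ) by omega]
  exact pascal_nat m r.toNat

lemma qint_zero : qint 0 = 0 := by simp [qint]

lemma qbinom_zero_left {r : ℤ} (hr : 0 < r) : qbinom 0 r = 0 := by
  rw [show r = (r.toNat : ℤ) by omega, qbinom_nat]
  rw [Finset.prod_eq_zero (Finset.mem_range.mpr (show 0 < r.toNat by omega))]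
  · simp
  · simpa using qint_zero

lemma pw1 (a b : ℤ) (A B : RatFunc ℚ) : v ^ a * (v ^ b * A) * B = v ^ (a + b) * A * B := by
  rw [← mul_assoc, zpw]

lemma pw2 (a b : ℤ) (A B : RatFunc ℚ) : v ^ a * (v ^ b * A * B) = v ^ (a + b) * A * B := by
  rw [← mul_assoc, ← mul_assoc, zpw]

def qS (n : ℕ) (x y : ℤ) : RatFunc ℚ :=
  ∑ k ∈ Finset.range (n + 1),
    v ^ (x * (k : ℤ) - y * ((n : ℤ) - (k : ℤ))) * qbinom x ((n : ℤ) - (k : ℤ)) * qbinom y (k : ℤ)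

lemma term_split (x y : ℤ) (n k : ℕ) (hk : (k : ℤ) ≤ (n : ℤ) + 1) :
    v ^ (x * k - y * (((n:ℤ)+1) - k)) * qbinom x (((n:ℤ)+1) - k) * qbinom y k
      = v ^ ((n:ℤ)+1) * (v ^ ((x-1) * k - y * (((n:ℤ)+1) - k)) * qbinom (x-1) (((n:ℤ)+1) - k) * qbinom y k)
      + v ^ ((n:ℤ)+1 - x - y) * (v ^ ((x-1) * k - y * ((n:ℤ) - k)) * qbinom (x-1) ((n:ℤ) - k) * qbinom y k) := by
  rw [pascal x (((n:ℤ)+1) - k) (by omega)]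
  rw [show (n:ℤ)+1 - k - 1 = (n:ℤ) - k by ring]
  rw [mul_add, add_mul, pw1, pw1, pw2, pw2]
  congr 3 <;> ring

lemma key_rec (x y : ℤ) (n : ℕ) :
    qS (n+1) x y = v ^ ((n:ℤ)+1) * qS (n+1) (x-1) y + v ^ ((n:ℤ)+1 - x - y) * qS n (x-1) y := by
  unfold qS
  push_cast
  rw [show ∑ k ∈ Finset.range (n+1+1),
        v ^ (x*(k:ℤ) - y*((n:ℤ)+1 - k)) * qbinom x ((n:ℤ)+1-k) * qbinom y k
      = ∑ k ∈ Finset.range (n+1+1),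
          (v ^ ((n:ℤ)+1) * (v ^ ((x-1)*k - y*((n:ℤ)+1-k)) * qbinom (x-1) ((n:ℤ)+1-k) * qbinom y k)
           + v ^ ((n:ℤ)+1-x-y) * (v ^ ((x-1)*k - y*((n:ℤ)-k)) * qbinom (x-1) ((n:ℤ)-k) * qbinom y k))
      from Finset.sum_congr rfl fun k hk =>
        term_split x y n k (by have := Finset.mem_range.mp hk; omega)]
  rw [Finset.sum_add_distrib, ← Finset.mul_sum, ← Finset.mul_sum]
  congr 2
  rw [Finset.sum_range_succ, show (n:ℤ) - ((n+1:ℕ):ℤ) = -1 by push_cast; ring,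
      qbinom_neg (x-1) (show (-1:ℤ) < 0 by norm_num)]
  simp

lemma qS_zero_left (n : ℕ) (y : ℤ) : qS n 0 y = qbinom y (n : ℤ) := by
  unfold qS
  rw [Finset.sum_eq_single_of_mem n (Finset.mem_range.mpr (by omega))]
  · rw [show (n:ℤ) - (n:ℤ) = 0 by ring, qbinom_zero]
    simp
  · intro k hk hne
    have hk' := Finset.mem_range.mp hk
    rw [qbinom_zero_left (show (0:ℤ) < (n:ℤ) - (k:ℤ) by omega)]
    ring

lemma main_aux (n : ℕ) : ∀ (x y : ℤ), qS n x y = qbinom (x + y) (n : ℤ) := by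
  induction n with
  | zero => intro x y; simp [qS, qbinom_zero]
  | succ n ih =>
    intro x
    induction x using Int.induction_on with
    | zero =>
      intro y
      rw [qS_zero_left, zero_add]
    | succ x hx =>
      intro y
      rw [key_rec (x+1) y n, show (x:ℤ)+1-1 = x by ring, hx y, ih x y]
      push_cast
      rw [pascal (x+1+y) ((n:ℤ)+1) (by omega)]
      rw [show x+1+y-1 = x+y by ring, show (n:ℤ)+1-1 = (n:ℤ) by ring,
        show (n:ℤ)+1-(x+1+y) = (n:ℤ)+1-(x+1)-y by ring]
    | pred x hx =>
      intro y
      have h := key_rec (-x) y n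
      rw [hx y, ih (-x-1) y] at h
      rw [show (n:ℤ)+1 - -x - y = (n:ℤ)+1-(-x+y) by ring] at h
      have hp := pascal (-x+y) ((n:ℤ)+1) (by omega)
      rw [show -x+y-1 = -x-1+y by ring, show (n:ℤ)+1-1 = (n:ℤ) by ring] at hp
      push_cast at h hp ⊢
      have hv : v ^ ((n:ℤ)+1) ≠ 0 := zpow_ne_zero _ v_ne_zero
      apply mul_left_cancel₀ hv
      linear_combination hp - h

/-- the q-Vandermonde identity
`Σ_{k=0}^{n} v^{xk − y(n−k)} [x choose n−k][y choose k] = [x+y choose n]`. -/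
theorem qbinom_vandermonde (x y : ℤ) (n : ℕ) :
    ∑ k ∈ Finset.range (n + 1),
        v ^ (x * (k : ℤ) - y * ((n : ℤ) - (k : ℤ))) * qbinom x ((n : ℤ) - (k : ℤ)) * qbinom y (k : ℤ)
      = qbinom (x + y) (n : ℤ) := by
  exact main_aux n x y
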